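/- Let u be a K-linear endomorphism of E whose minimal polynomial is p^k, where p ∈ K[X] is monic irreducible and k ≥ 1. Then there exist natural numbers a_1, …, a_k with a_k > 0 such that E, regarded as a K[X]-module with X acting as u, is isomorphic to the direct sum ⨁_{i=1}^{k} (K[X]/(p^i))^{a_i} of cyclic modules. -/

import Mathlib

open Polynomial

section Aux

variable {R : Type*} [Semiring R]

/-- Drop pi factors that are subsingletons. -/
noncomputable def piSubtypeLEquiv {ι : Type*} (V : ι → Type*)
    [∀ i, AddCommMonoid (V i)] [∀ i, Module R (V i)] (P : ι → Prop) [DecidablePred P]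
    (h : ∀ i, ¬ P i → Subsingleton (V i)) :
    ((i : ι) → V i) ≃ₗ[R] ((i : {x // P x}) → V i.1) where
  toFun f i := f i.1
  map_add' _ _ := rfl
  map_smul' _ _ := rfl
  invFun g i := if hi : P i then g ⟨i, hi⟩ else 0
  left_inv f := by
    funext i
    by_cases hi : P i
    · simp [hi]
    · exact (h i hi).elim _ _
  right_inv g := by
    funext i
    exact dif_pos i.2

end Aux


universe u v

/-- Universe-flexible version of `Module.torsion_by_prime_power_decomposition`. -/
theorem aux_decomp {R : Type u} [CommRing R] [IsDomain R] [IsPrincipalIdealRing R]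
    {M : Type v} [AddCommGroup M] [Module R M] [Module.Finite R M] {p : R}
    (hirr : Irreducible p) (htors : Module.IsTorsion' M (Submonoid.powers p)) :
    ∃ (d : ℕ) (e : Fin d → ℕ), Nonempty (M ≃ₗ[R] DirectSum (Fin d) fun i => R ⧸ R ∙ p ^ e i) := by
  classical
  haveI : Module.Finite R (ULift.{u} M) := Module.Finite.equiv ULift.moduleEquiv.symm
  have htors' : Module.IsTorsion' (ULift.{u} M) (Submonoid.powers p) := by
    intro x
    obtain ⟨c, hc⟩ := @htors x.down
    exact ⟨c, ULift.ext _ _ hc⟩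
  obtain ⟨d, e, ⟨f'⟩⟩ := Module.torsion_by_prime_power_decomposition hirr htors'
  exact ⟨d, e, ⟨(ULift.moduleEquiv.symm.trans f' : _)⟩⟩

theorem stmt_0 {K E : Type*} [Field K] [AddCommGroup E] [Module K E]
    [FiniteDimensional K E]
    (u : Module.End K E) (p : K[X]) (hp : p.Monic) (hirr : Irreducible p)
    (k : ℕ) (hk : 1 ≤ k) (hmin : minpoly K u = p ^ k) :
    ∃ a : ℕ → ℕ, 0 < a k ∧
      Nonempty (Module.AEval' u ≃ₗ[K[X]]
        DirectSum (Fin k) fun i => Fin (a (i.1 + 1)) → K[X] ⧸ Ideal.span {p ^ (i.1 + 1)}) := by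
  classical
  have hp0 : p ≠ 0 := hirr.ne_zero
  have hpu : ¬ IsUnit p := hirr.not_isUnit
  -- `p ^ k` annihilates the module
  have hann : ∀ x : Module.AEval' u, (p ^ k) • x = 0 := by
    intro x
    have h0 : aeval u (p ^ k) = 0 := by rw [← hmin]; exact minpoly.aeval K u
    apply (Module.AEval.of K E u).symm.injective
    rw [Module.AEval.of_symm_smul, h0]
    simp
  have htors : Module.IsTorsion' (Module.AEval' u) (Submonoid.powers p) := fun x =>
    ⟨⟨p ^ k, ⟨k, rfl⟩⟩, hann x⟩
  obtain ⟨d, e, ⟨f⟩⟩ := aux_decomp hirr htors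
  -- exponents are at most `k`
  have he_le : ∀ i, e i ≤ k := by
    intro i
    have h1 := hann (f.symm (DirectSum.lof K[X] (Fin d)
      (fun i => K[X] ⧸ (K[X] ∙ p ^ e i)) i 1))
    have h2 : (p ^ k) • (DirectSum.lof K[X] (Fin d)
        (fun i => K[X] ⧸ (K[X] ∙ p ^ e i)) i 1) = 0 := by
      have := congrArg f h1
      rwa [map_smul, f.apply_symm_apply, map_zero] at this
    have h3 : (p ^ k) • (1 : K[X] ⧸ (K[X] ∙ p ^ e i)) = 0 := by
      have h4 := congrArg (fun z : DirectSum (Fin d) (fun i => K[X] ⧸ (K[X] ∙ p ^ e i)) => z i) h2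
      simp only [DirectSum.smul_apply, DirectSum.lof_apply, DirectSum.zero_apply] at h4
      exact h4
    rw [show (1 : K[X] ⧸ (K[X] ∙ p ^ e i)) = Submodule.Quotient.mk 1 from rfl,
      ← Submodule.Quotient.mk_smul, Submodule.Quotient.mk_eq_zero] at h3
    obtain ⟨c, hc⟩ := Submodule.mem_span_singleton.mp h3
    have hdvd : p ^ e i ∣ p ^ k := Dvd.intro_left c (by
      rw [smul_eq_mul] at hc
      rw [hc, smul_eq_mul, mul_one])
    exact (pow_dvd_pow_iff hp0 hpu).mp hdvd
  -- elements of the quotients are annihilated by large powers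
  have hQzero : ∀ (i : Fin d) (m : ℕ), e i ≤ m →
      ∀ c : K[X] ⧸ (K[X] ∙ p ^ e i), (p ^ m) • c = 0 := by
    intro i m hm c
    obtain ⟨r, rfl⟩ := Submodule.Quotient.mk_surjective _ c
    rw [← Submodule.Quotient.mk_smul, Submodule.Quotient.mk_eq_zero]
    refine Submodule.mem_span_singleton.mpr ⟨p ^ (m - e i) * r, ?_⟩
    have hpm : p ^ m = p ^ (m - e i) * p ^ e i := by
      rw [← pow_add]; congr 1; omega
    rw [smul_eq_mul, smul_eq_mul, hpm]; ring
  -- some exponent is exactly `k`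
  have hex : ∃ i, e i = k := by
    by_contra hcon
    push_neg at hcon
    have hlt : ∀ i, e i ≤ k - 1 := fun i => by
      have h1 := he_le i; have h2 := hcon i; omega
    have hzero : ∀ x : Module.AEval' u, (p ^ (k - 1)) • x = 0 := by
      intro x
      apply f.injective
      rw [map_smul, map_zero]
      refine DFinsupp.ext fun i => ?_
      rw [DirectSum.smul_apply, hQzero i (k - 1) (hlt i), DirectSum.zero_apply]
    have haev : aeval u (p ^ (k - 1)) = 0 := by
      ext v
      have h1 := hzero (Module.AEval.of K E u v)
      have h2 := congrArg (Module.AEval.of K E u).symm h1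
      rw [Module.AEval.of_symm_smul, map_zero] at h2
      simpa [Module.End.smul_def] using h2
    have hdv := minpoly.dvd K u haev
    rw [hmin] at hdv
    have := (pow_dvd_pow_iff hp0 hpu).mp hdv
    omega
  -- multiplicities
  let a : ℕ → ℕ := fun m => Fintype.card {i : Fin d // e i = m}
  have hak : 0 < a k := Fintype.card_pos_iff.mpr ⟨⟨hex.choose, hex.choose_spec⟩⟩
  refine ⟨a, hak, ?_⟩
  -- index bookkeeping
  set T := {i : Fin d // e i ≠ 0} with hT
  let F : T → Fin k := fun x => ⟨e x.1 - 1, by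
    have h1 := he_le x.1; have h2 := x.2; omega⟩
  let g' : ∀ j : Fin k, {x : T // F x = j} ≃ {i : Fin d // e i = j.1 + 1} := fun j =>
    { toFun := fun x => ⟨x.1.1, by
        have h1 : (F x.1).1 = j.1 := congrArg Fin.val x.2
        have h2 : e x.1.1 ≠ 0 := x.1.2
        simp only [F] at h1
        omega⟩
      invFun := fun i => ⟨⟨i.1, by have := i.2; omega⟩, by
        apply Fin.ext
        have := i.2
        simp only [F]
        omega⟩
      left_inv := fun x => Subtype.ext (Subtype.ext rfl)
      right_inv := fun i => Subtype.ext rfl }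
  have hcard : ∀ j : Fin k, Fintype.card {x : T // F x = j} = a (j.1 + 1) := fun j =>
    Fintype.card_congr (g' j)
  let w : ∀ j : Fin k, Fin (a (j.1 + 1)) ≃ {x : T // F x = j} := fun j =>
    (Fintype.equivFinOfCardEq (hcard j)).symm
  let S := Σ j : Fin k, Fin (a (j.1 + 1))
  let τ : S ≃ T := (Equiv.sigmaCongrRight w).trans (Equiv.sigmaFiberEquiv F)
  have hτ : ∀ x : S, e (τ x).1 = x.1.1 + 1 := by
    rintro ⟨j, m⟩
    show e ((w j m).1).1 = j.1 + 1
    have h2 : (F (w j m).1).1 = j.1 := congrArg Fin.val (w j m).2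
    have h3 : e ((w j m).1).1 ≠ 0 := ((w j m).1).2
    simp only [F] at h2
    omega
  -- subsingleton components can be dropped
  have hsub : ∀ i : Fin d, ¬ (e i ≠ 0) → Subsingleton (K[X] ⧸ (K[X] ∙ p ^ e i)) := by
    intro i hi
    rw [not_not] at hi
    rw [hi, pow_zero]
    refine Submodule.Quotient.subsingleton_iff.mpr ?_
    exact Ideal.span_singleton_one
  -- the cast equivalence on components
  have cast1 : ∀ {m n : ℕ}, m = n →
      ((K[X] ⧸ (K[X] ∙ p ^ m)) ≃ₗ[K[X]] (K[X] ⧸ Ideal.span {p ^ n})) := by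
    rintro m n rfl
    exact LinearEquiv.refl _ _
  refine ⟨?_⟩
  exact f.trans <|
    (DirectSum.linearEquivFunOnFintype K[X] (Fin d) (fun i => K[X] ⧸ (K[X] ∙ p ^ e i))).trans <|
    (piSubtypeLEquiv (fun i : Fin d => K[X] ⧸ (K[X] ∙ p ^ e i)) (fun i => e i ≠ 0) hsub).trans <|
    ((LinearEquiv.piCongrLeft K[X] (fun y : T => K[X] ⧸ (K[X] ∙ p ^ e y.1)) τ).symm).trans <|
    (LinearEquiv.piCongrRight (fun x : S => cast1 (hτ x))).trans <|
    (LinearEquiv.piCurry K[X]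
      (fun (j : Fin k) (_ : Fin (a (j.1 + 1))) => K[X] ⧸ Ideal.span {p ^ (j.1 + 1)})).trans <|
    (DirectSum.linearEquivFunOnFintype K[X] (Fin k)
      (fun j => Fin (a (j.1 + 1)) → K[X] ⧸ Ideal.span {p ^ (j.1 + 1)})).symm
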